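/- (Lower estimate of the inner-product sum, 0 ≤ q < 1) Suppose 0 ≤ q < 1. For all natural numbers r, s, r', s', k with r + s = r' + s' and r ≥ r', one has ∑_{i=0}^{r'} q^{(r-i)(r'-i) + k(r-i) + k(r'-i)}·[r']_q!·[s']_q!·binom(r,i)_q·binom(s,r'-i)_q ≥ C(q)^{-1}·q^{k(r-r')}·[r+s]_q!, where terms with i > r or r' - i > s vanish since the corresponding q-binomial coefficient is 0. -/

import Mathlib

/-- The q-integer `[n]_q = (1 - q^n)/(1 - q)`. -/
noncomputable def qInt (q : ℝ) (n : ℕ) : ℝ := (1 - q ^ n) / (1 - q)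

/-- The q-factorial `[n]_q! = [1]_q ⋯ [n]_q`, with `[0]_q! = 1`. -/
noncomputable def qFact (q : ℝ) : ℕ → ℝ
  | 0 => 1
  | n + 1 => qFact q n * qInt q (n + 1)

/-- The q-binomial coefficient `binom(n,m)_q`, with value `0` when `m > n`. -/
noncomputable def qBinom (q : ℝ) (n m : ℕ) : ℝ :=
  if m ≤ n then qFact q n / (qFact q m * qFact q (n - m)) else 0

/-- The constant `C(t) = ∏_{i=1}^∞ (1 - t^i)⁻¹` for `0 ≤ t < 1`. -/
noncomputable def Cconst (t : ℝ) : ℝ := ∏' i : ℕ, (1 - t ^ (i + 1))⁻¹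

lemma qpow_lt_one {q : ℝ} (hq₁ : 0 ≤ q) (hq₂ : q < 1) {n : ℕ} (hn : 0 < n) : q ^ n < 1 :=
  pow_lt_one₀ hq₁ hq₂ hn.ne'

lemma aux_multi {q : ℝ} (hq₁ : 0 ≤ q) (hq₂ : q < 1) :
    Multipliable (fun i : ℕ => (1 - q ^ (i + 1))⁻¹) := by
  have hlt : ∀ i : ℕ, q ^ (i + 1) < 1 := fun i => qpow_lt_one hq₁ hq₂ (Nat.succ_pos i)
  have hpos : ∀ i : ℕ, (0:ℝ) < (1 - q ^ (i + 1))⁻¹ := fun i =>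
    inv_pos.2 (by linarith [hlt i])
  have hlog : Summable (fun i : ℕ => Real.log ((1 - q ^ (i + 1))⁻¹)) := by
    refine Summable.of_nonneg_of_le (g := fun i : ℕ => Real.log ((1 - q ^ (i+1))⁻¹))
      (f := fun i : ℕ => (1 - q)⁻¹ * q ^ (i + 1)) ?_ ?_ ?_
    · intro i
      apply Real.log_nonneg
      rw [le_inv_comm₀ one_pos (by linarith [hlt i])]
      linarith [pow_nonneg hq₁ (i + 1)]
    · intro i
      have h1 := Real.log_le_sub_one_of_pos (hpos i)
      have h2 : (1 - q ^ (i + 1))⁻¹ - 1 ≤ (1 - q)⁻¹ * q ^ (i + 1) := by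
        have hne : (0:ℝ) < 1 - q ^ (i+1) := by linarith [hlt i]
        have hne2 : (0:ℝ) < 1 - q := by linarith
        have ha : q ^ (i+1) ≤ q := by
          calc q ^ (i+1) ≤ q ^ 1 := pow_le_pow_of_le_one hq₁ hq₂.le (by omega)
          _ = q := pow_one q
        have huv : (1 - q ^ (i+1))⁻¹ ≤ (1 - q)⁻¹ := by
          apply inv_anti₀ hne2; linarith
        have hu : (1 - q ^ (i+1))⁻¹ * (1 - q ^ (i+1)) = 1 := inv_mul_cancel₀ hne.ne'
        nlinarith [pow_nonneg hq₁ (i+1), mul_le_mul_of_nonneg_right huv (pow_nonneg hq₁ (i+1))]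
      linarith
    · have := (summable_geometric_of_lt_one hq₁ hq₂).mul_left (1 - q)⁻¹
      exact this.comp_injective (add_left_injective 1) |>.congr (by intro i; simp)
  exact Real.multipliable_of_summable_log hpos hlog

lemma qInt_pos {q : ℝ} (hq₁ : 0 ≤ q) (hq₂ : q < 1) {n : ℕ} (hn : 0 < n) : 0 < qInt q n :=
  div_pos (by linarith [qpow_lt_one hq₁ hq₂ hn]) (by linarith)

lemma qFact_pos {q : ℝ} (hq₁ : 0 ≤ q) (hq₂ : q < 1) (n : ℕ) : 0 < qFact q n := by
  induction n with
  | zero => norm_num [qFact]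
  | succ m ih => exact mul_pos ih (qInt_pos hq₁ hq₂ m.succ_pos)

lemma qBinom_nonneg {q : ℝ} (hq₁ : 0 ≤ q) (hq₂ : q < 1) (n m : ℕ) : 0 ≤ qBinom q n m := by
  unfold qBinom
  split
  · exact le_of_lt (div_pos (qFact_pos hq₁ hq₂ _)
      (mul_pos (qFact_pos hq₁ hq₂ _) (qFact_pos hq₁ hq₂ _)))
  · exact le_rfl

lemma qFact_add (q : ℝ) (a m : ℕ) :
    qFact q (a + m) = qFact q a * ∏ t ∈ Finset.range m, qInt q (a + 1 + t) := by
  induction m with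
  | zero => simp
  | succ m ih =>
    rw [Finset.prod_range_succ, ← mul_assoc, ← ih]
    show qFact q (a + m) * qInt q (a + m + 1) = _
    ring_nf

lemma prod_le_Cconst {q : ℝ} (hq₁ : 0 ≤ q) (hq₂ : q < 1) (s : ℕ) :
    ∏ t ∈ Finset.range s, (1 - q ^ (t + 1))⁻¹ ≤ Cconst q := by
  have hlt : ∀ i : ℕ, q ^ (i + 1) < 1 := fun i => qpow_lt_one hq₁ hq₂ (Nat.succ_pos i)
  have hone : ∀ i : ℕ, (1:ℝ) ≤ (1 - q ^ (i + 1))⁻¹ := by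
    intro i
    rw [le_inv_comm₀ one_pos (by linarith [hlt i])]
    linarith [pow_nonneg hq₁ (i + 1)]
  have hp := (aux_multi hq₁ hq₂).hasProd
  refine ge_of_tendsto hp ?_
  filter_upwards [Filter.eventually_ge_atTop (Finset.range s)] with T hT
  rw [← Finset.prod_sdiff hT]
  have h1 : (1:ℝ) ≤ ∏ i ∈ T \ Finset.range s, (1 - q ^ (i + 1))⁻¹ := by
    calc (1:ℝ) = ∏ _i ∈ T \ Finset.range s, (1:ℝ) := by simp
    _ ≤ _ := Finset.prod_le_prod (by simp) (fun i _ => hone i)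
  have h0 : (0:ℝ) ≤ ∏ t ∈ Finset.range s, (1 - q ^ (t + 1))⁻¹ :=
    Finset.prod_nonneg fun i _ => by linarith [hone i]
  exact le_mul_of_one_le_left h0 h1

lemma Cconst_pos {q : ℝ} (hq₁ : 0 ≤ q) (hq₂ : q < 1) : 0 < Cconst q :=
  lt_of_lt_of_le one_pos (by simpa using prod_le_Cconst hq₁ hq₂ 0)

lemma Cconst_inv_le {q : ℝ} (hq₁ : 0 ≤ q) (hq₂ : q < 1) (s : ℕ) :
    (Cconst q)⁻¹ ≤ ∏ t ∈ Finset.range s, (1 - q ^ (t + 1)) := by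
  have hlt : ∀ i : ℕ, q ^ (i + 1) < 1 := fun i => qpow_lt_one hq₁ hq₂ (Nat.succ_pos i)
  have hP : (0:ℝ) < ∏ t ∈ Finset.range s, (1 - q ^ (t + 1)) :=
    Finset.prod_pos fun i _ => by linarith [hlt i]
  have h := prod_le_Cconst hq₁ hq₂ s
  rw [Finset.prod_inv_distrib] at h
  have := inv_anti₀ (inv_pos.2 hP) h
  rwa [inv_inv] at this

lemma termwise {q : ℝ} (hq₁ : 0 ≤ q) (hq₂ : q < 1) {d r : ℕ} (t : ℕ) (_hdr : d ≤ r) :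
    (1 - q ^ (t + 1)) * qInt q (r + 1 + t) ≤ qInt q (d + 1 + t) := by
  unfold qInt
  rw [mul_div_assoc']
  have h1q : (0:ℝ) < 1 - q := by linarith
  gcongr
  have h1 : q ^ (d + 1 + t) ≤ q ^ (t + 1) := pow_le_pow_of_le_one hq₁ hq₂.le (by omega)
  nlinarith [pow_nonneg hq₁ (r + 1 + t), pow_nonneg hq₁ (t + 1),
    pow_le_one₀ hq₁ hq₂.le (n := t + 1)]

lemma core_ineq {q : ℝ} (hq₁ : 0 ≤ q) (hq₂ : q < 1) (r d s : ℕ) (hd : d ≤ r) :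
    (Cconst q)⁻¹ * qFact q (r + s) ≤ qFact q (d + s) * qFact q r / qFact q d := by
  rw [qFact_add q r s, qFact_add q d s]
  set Pr := ∏ t ∈ Finset.range s, qInt q (r + 1 + t) with hPr
  set Pd := ∏ t ∈ Finset.range s, qInt q (d + 1 + t) with hPd
  have hPrpos : 0 ≤ Pr := Finset.prod_nonneg fun i _ =>
    (qInt_pos hq₁ hq₂ (by omega)).le
  have key : (Cconst q)⁻¹ * Pr ≤ Pd := by
    calc (Cconst q)⁻¹ * Pr
        ≤ (∏ t ∈ Finset.range s, (1 - q ^ (t + 1))) * Pr :=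
          mul_le_mul_of_nonneg_right (Cconst_inv_le hq₁ hq₂ s) hPrpos
      _ = ∏ t ∈ Finset.range s, ((1 - q ^ (t + 1)) * qInt q (r + 1 + t)) :=
          (Finset.prod_mul_distrib).symm
      _ ≤ Pd := Finset.prod_le_prod
          (fun i _ => mul_nonneg (by linarith [pow_lt_one₀ hq₁ hq₂ (by omega : i+1 ≠ 0)])
            (qInt_pos hq₁ hq₂ (by omega)).le)
          (fun i _ => termwise hq₁ hq₂ i hd)
  have hfr := qFact_pos hq₁ hq₂ r
  have hfd := qFact_pos hq₁ hq₂ d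
  calc (Cconst q)⁻¹ * (qFact q r * Pr) = qFact q r * ((Cconst q)⁻¹ * Pr) := by ring
    _ ≤ qFact q r * Pd := mul_le_mul_of_nonneg_left key hfr.le
    _ = qFact q d * Pd * qFact q r / qFact q d := by field_simp

/-- Lower estimate of the inner-product sum for `0 ≤ q < 1`. -/
theorem inner_sum_lower_nonneg (q : ℝ) (hq₁ : 0 ≤ q) (hq₂ : q < 1)
    (r s r' s' k : ℕ) (hsum : r + s = r' + s') (hr : r' ≤ r) :
    (Cconst q)⁻¹ * q ^ (k * (r - r')) * qFact q (r + s) ≤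
    ∑ i ∈ Finset.range (r' + 1),
      q ^ ((r - i) * (r' - i) + k * (r - i) + k * (r' - i)) *
        qFact q r' * qFact q s' * qBinom q r i * qBinom q s (r' - i) := by
  set d := r - r' with hdd
  have hterm_nonneg : ∀ i ∈ Finset.range (r' + 1),
      0 ≤ q ^ ((r - i) * (r' - i) + k * (r - i) + k * (r' - i)) *
        qFact q r' * qFact q s' * qBinom q r i * qBinom q s (r' - i) := by
    intro i _
    have := qFact_pos hq₁ hq₂ r'
    have := qFact_pos hq₁ hq₂ s'
    have := qBinom_nonneg hq₁ hq₂ r i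
    have := qBinom_nonneg hq₁ hq₂ s (r' - i)
    positivity
  refine le_trans ?_ (Finset.single_le_sum hterm_nonneg
    (Finset.self_mem_range_succ r'))
  rw [Nat.sub_self, Nat.mul_zero, Nat.mul_zero, Nat.add_zero, Nat.zero_add]
  have hb0 : qBinom q s 0 = 1 := by
    have := (qFact_pos hq₁ hq₂ s).ne'
    simp [qBinom, qFact, this]
  have hbr : qBinom q r r' = qFact q r / (qFact q r' * qFact q d) := by
    simp [qBinom, hr, hdd]
  rw [hb0, hbr, mul_one]
  have hfr' := qFact_pos hq₁ hq₂ r'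
  have hfd := qFact_pos hq₁ hq₂ d
  have hs' : s' = d + s := by omega
  have hcore := core_ineq hq₁ hq₂ r d s (by omega)
  have hqk : (0:ℝ) ≤ q ^ (k * d) := pow_nonneg hq₁ _
  calc (Cconst q)⁻¹ * q ^ (k * d) * qFact q (r + s)
      = ((Cconst q)⁻¹ * qFact q (r + s)) * q ^ (k * d) := by ring
    _ ≤ (qFact q (d + s) * qFact q r / qFact q d) * q ^ (k * d) :=
        mul_le_mul_of_nonneg_right hcore hqk
    _ = q ^ (k * d) * qFact q r' * qFact q s' *
          (qFact q r / (qFact q r' * qFact q d)) := by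
        rw [hs']; field_simp
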